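/- Let 1 ≤ t < k ≤ n. If an intersecting family F of k-element subsets of [n] with maximal degree Δ and diversity γ satisfies Δ + (k/(k−t))·γ ≤ C(n−1,k−1), then δ_t(F) ≤ C(n−t−1, k−t−1). -/

import Mathlib

open Finset

def IntersectingFam (F : Finset (Finset ℕ)) : Prop :=
  ∀ A ∈ F, ∀ B ∈ F, (A ∩ B).Nonempty

def CrossIntersecting (𝒜 ℬ : Finset (Finset ℕ)) : Prop :=
  ∀ A ∈ 𝒜, ∀ B ∈ ℬ, (A ∩ B).Nonempty

/-- The degree of an element `i`: the number of sets of `F` containing `i`. -/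
def famDeg (F : Finset (Finset ℕ)) (i : ℕ) : ℕ := (F.filter (fun A => i ∈ A)).card

/-- The maximal degree `Δ(F)` over the ground set `[n]`. -/
def maxDeg (n : ℕ) (F : Finset (Finset ℕ)) : ℕ := (Finset.Icc 1 n).sup (famDeg F)

/-- The diversity `γ(F) = |F| − Δ(F)`. -/
def diversity (n : ℕ) (F : Finset (Finset ℕ)) : ℕ := F.card - maxDeg n F

/-- The degree of a subset `S`: the number of sets of `F` containing `S`. -/
def tDeg (F : Finset (Finset ℕ)) (S : Finset ℕ) : ℕ := (F.filter (fun A => S ⊆ A)).card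

/-- Lexicographic order: `A ⪯ B` iff `A ⊇ B` or `min (A \ B) < min (B \ A)`. -/
def lexLE (A B : Finset ℕ) : Prop := B ⊆ A ∨ (A \ B).min < (B \ A).min

instance : DecidableRel lexLE := fun A B => by unfold lexLE; exact inferInstance

def lexLT (A B : Finset ℕ) : Prop := lexLE A B ∧ A ≠ B

/-- Lex family with characteristic set `X` on ground set `[2,n]`:
`L(X,a) = {A ⊆ [2,n] : |A| = a, A ⪯ X ∩ [2,n]}`. -/
def lexFam (n a : ℕ) (X : Finset ℕ) : Finset (Finset ℕ) :=
  ((Finset.Icc 2 n).powersetCard a).filter (fun A => lexLE A (X ∩ Finset.Icc 2 n))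

/-- Lex family with characteristic set `X` on ground set `[n]`:
`L(X,c) = {A ⊆ [n] : |A| = c, A ⪯ X}`. -/
def lexFam1 (n c : ℕ) (X : Finset ℕ) : Finset (Finset ℕ) :=
  ((Finset.Icc 1 n).powersetCard c).filter (fun A => lexLE A X)

/-- Resistant pairs for uniformity `k` on ground set `[n]`. -/
def ResistantPair (n k : ℕ) (S T : Finset ℕ) : Prop :=
  (S = ({1, 4} : Finset ℕ) ∧ T = ({2, 3, 4} : Finset ℕ)) ∨
  (1 ∈ S ∧ S ⊆ Finset.Icc 1 n ∧ T ⊆ Finset.Icc 2 n ∧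
    ∃ j : ℕ, T.max = (j : WithTop ℕ) ∧ S ∩ T = {j} ∧ S ∪ T = Finset.Icc 1 j ∧
      S.card ≤ k ∧ T.card ≤ k ∧
      ∀ i : ℕ, 4 ≤ i → i ≤ j → (Finset.Icc 1 i ∩ S).card < (Finset.Icc 1 i \ S).card)

/-- `(a,b)`-resistant pairs on ground set `[n]`. -/
def ABResistantPair (n a b : ℕ) (S T : Finset ℕ) : Prop :=
  (T = Finset.Icc 1 (b - a + 2) ∧ S = ({1, b - a + 2} : Finset ℕ)) ∨
  (S ⊆ Finset.Icc 1 n ∧ T ⊆ Finset.Icc 1 n ∧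
    ∃ j : ℕ, T.max = (j : WithTop ℕ) ∧ S ∩ T = {j} ∧ S ∪ T = Finset.Icc 1 j ∧
      S.card ≤ a ∧ T.card ≤ b ∧
      ∀ i : ℕ, b - a + 2 ≤ i → i ≤ j →
        ((Finset.Icc 1 i ∩ S).card : ℤ) - (a : ℤ) < ((Finset.Icc 1 i \ S).card : ℤ) - (b : ℤ))

/-- Resistant numbers: `γ` is resistant if in its `(n−k−1)`-cascade form
`γ = Σ_{i=1}^s C(n−b_i, n−k−i)` (with `1 ≤ b_1 < … < b_s`) one has `|S_γ| ≤ k`,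
`s ≤ k−1` and `b_i > 2i+2` for each `i`; in addition `C(n−4,k−3)` is resistant. -/
def IsResistantNum (n k γ : ℕ) : Prop :=
  γ = Nat.choose (n - 4) (k - 3) ∨
  ∃ (s : ℕ) (b : ℕ → ℕ), 1 ≤ s ∧ 1 ≤ b 1 ∧
    (∀ i j, 1 ≤ i → i < j → j ≤ s → b i < b j) ∧
    γ = ∑ i ∈ Finset.Icc 1 s, Nat.choose (n - b i) (n - k - i) ∧
    s ≤ k - 1 ∧
    (insert (b s) (Finset.Icc 2 (b s) \ (Finset.Icc 1 s).image b)).card ≤ k ∧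
    (∀ i, 1 ≤ i → i ≤ s → b i > 2 * i + 2)

/-- The family `J_i`. -/
def Jfam (n k i : ℕ) : Finset (Finset ℕ) :=
  {Finset.Icc 2 (k+1), Finset.Icc (i+1) (k+i)} ∪
    ((Finset.Icc 1 n).powersetCard k).filter
      (fun F => 1 ∈ F ∧ (F ∩ Finset.Icc 2 (k+1)).Nonempty ∧ (F ∩ Finset.Icc (i+1) (k+i)).Nonempty)

/-- Two families are isomorphic if one is obtained from the other by a permutation
of the ground set `[n]`. -/
def IsomorphicFam (n : ℕ) (F G : Finset (Finset ℕ)) : Prop :=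
  ∃ σ : Equiv.Perm ℕ, (Finset.Icc 1 n).image σ = Finset.Icc 1 n ∧
    F.image (fun A => A.image σ) = G

/-- `F` is isomorphic to a subfamily of `G`. -/
def IsoSubfamily (n : ℕ) (F G : Finset (Finset ℕ)) : Prop :=
  ∃ σ : Equiv.Perm ℕ, (Finset.Icc 1 n).image σ = Finset.Icc 1 n ∧
    F.image (fun A => A.image σ) ⊆ G

/-- `L` is an initial segment of the lex order on `k`-subsets of `[2,n]`. -/
def IsInitialSeg (n k : ℕ) (L : Finset (Finset ℕ)) : Prop :=
  L ⊆ (Finset.Icc 2 n).powersetCard k ∧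
  ∀ A ∈ L, ∀ B ∈ (Finset.Icc 2 n).powersetCard k, lexLE B A → B ∈ L

/-- The maximal intersecting family `F_l` whose sets avoiding `1` are exactly `L`. -/
def maxFam (n k : ℕ) (L : Finset (Finset ℕ)) : Finset (Finset ℕ) :=
  L ∪ ((Finset.Icc 1 n).powersetCard k).filter
    (fun A => 1 ∈ A ∧ ∀ B ∈ L, (A ∩ B).Nonempty)

/-- The sets `T` allowed in the recursive definition of a `T_l`-neutral pair:
`T_l` is allowed, and whenever `T'` is allowed so is `T' ∪ {2|T'|}`. -/
inductive NeutralSet (T0 : Finset ℕ) : Finset ℕ → Prop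
  | base : NeutralSet T0 T0
  | step (T' : Finset ℕ) : NeutralSet T0 T' → NeutralSet T0 (insert (2 * T'.card) T')

/-- The family `A_0(n,k,s)`. -/
def A0fam (n k s : ℕ) : Finset (Finset ℕ) :=
  ((Finset.Icc 1 n).powersetCard k).filter (fun A => (A ∩ Finset.Icc 1 s).Nonempty)


theorem kchoose_aux (k t : ℕ) (h : t < k) : k * (k-1).choose t = (k - t) * k.choose t := by
  have h1 : k - 1 + 1 = k := by omega
  have h2 : k - t - 1 + 1 = k - t := by omega
  have := Nat.add_one_mul_choose_eq (k-1) (k-t-1)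
  simp only [Nat.succ_eq_add_one, h1, h2] at this
  have e1 : (k-1).choose (k-t-1) = (k-1).choose t := by
    have : k - 1 - t = k - t - 1 := by omega
    rw [← this, Nat.choose_symm (by omega)]
  have e2 : k.choose (k-t) = k.choose t := Nat.choose_symm h.le
  rw [e1, e2] at this
  rw [this, Nat.mul_comm]

theorem statement17 (n k t : ℕ) (ht : 1 ≤ t) (htk : t < k) (hkn : k ≤ n)
    (F : Finset (Finset ℕ)) (hF : F ⊆ (Finset.Icc 1 n).powersetCard k)
    (hint : IntersectingFam F)
    (hcond : (maxDeg n F : ℚ) +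
        (k : ℚ) / ((k : ℚ) - (t : ℚ)) * (diversity n F : ℚ) ≤
      (Nat.choose (n - 1) (k - 1) : ℚ)) :
    ∃ S ∈ (Finset.Icc 1 n).powersetCard t,
      tDeg F S ≤ Nat.choose (n - t - 1) (k - t - 1) := by
  have hn2 : 2 ≤ n := by omega
  have hne : (Finset.Icc 1 n).Nonempty := by
    rw [Finset.nonempty_Icc]; omega
  obtain ⟨i, hi, hΔ⟩ := Finset.exists_mem_eq_sup (Finset.Icc 1 n) hne (famDeg F)
  set P : Finset ℕ := (Finset.Icc 1 n).erase i with hP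
  have hPcard : P.card = n - 1 := by
    rw [hP, Finset.card_erase_of_mem hi, Nat.card_Icc]; omega
  set D : ℕ := famDeg F i with hD
  have hDmax : maxDeg n F = D := hΔ
  have hDle : D ≤ F.card := Finset.card_filter_le _ _
  -- the double count
  have hsum : ∑ S ∈ P.powersetCard t, tDeg F S
      = D * (k-1).choose t + (F.card - D) * k.choose t := by
    have h1 : ∑ S ∈ P.powersetCard t, tDeg F S
        = ∑ A ∈ F, ((A ∩ P).card).choose t := by
      unfold tDeg
      simp_rw [Finset.card_filter]
      rw [Finset.sum_comm]
      refine Finset.sum_congr rfl fun A hA => ?_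
      rw [← Finset.card_filter]
      have : (P.powersetCard t).filter (fun S => S ⊆ A) = (A ∩ P).powersetCard t := by
        ext S
        simp only [Finset.mem_filter, Finset.mem_powersetCard, Finset.subset_inter_iff]
        tauto
      rw [this, Finset.card_powersetCard]
    rw [h1, ← Finset.sum_filter_add_sum_filter_not F (fun A => i ∈ A)]
    have h2 : ∀ A ∈ F.filter (fun A => i ∈ A), ((A ∩ P).card).choose t = (k-1).choose t := by
      intro A hA
      rw [Finset.mem_filter] at hA
      have hAsub := hF hA.1
      rw [Finset.mem_powersetCard] at hAsub
      have : A ∩ P = A.erase i := by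
        ext x
        simp only [hP, Finset.mem_inter, Finset.mem_erase]
        constructor
        · rintro ⟨hx, hx2, _⟩; exact ⟨hx2, hx⟩
        · rintro ⟨hx1, hx2⟩; exact ⟨hx2, hx1, hAsub.1 hx2⟩
      rw [this, Finset.card_erase_of_mem hA.2, hAsub.2]
    have h3 : ∀ A ∈ F.filter (fun A => ¬ i ∈ A), ((A ∩ P).card).choose t = k.choose t := by
      intro A hA
      rw [Finset.mem_filter] at hA
      have hAsub := hF hA.1
      rw [Finset.mem_powersetCard] at hAsub
      have : A ∩ P = A := by
        apply Finset.inter_eq_left.2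
        intro x hx
        exact Finset.mem_erase.2 ⟨fun h => hA.2 (h ▸ hx), hAsub.1 hx⟩
      rw [this, hAsub.2]
    rw [Finset.sum_congr rfl h2, Finset.sum_congr rfl h3,
      Finset.sum_const, Finset.sum_const, smul_eq_mul, smul_eq_mul]
    have hcf : (F.filter (fun A => i ∈ A)).card = D := rfl
    have hcf2 : (F.filter (fun A => ¬ i ∈ A)).card = F.card - D := by
      have := Finset.card_filter_add_card_filter_not (s := F) (p := fun A => i ∈ A)
      omega
    rw [hcf, hcf2]
  -- bound the sum using hcond
  have hkt : (0:ℚ) < (k:ℚ) - (t:ℚ) := by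
    have : (t:ℚ) < (k:ℚ) := by exact_mod_cast htk
    linarith
  have hG : (diversity n F : ℚ) = (F.card : ℚ) - (D : ℚ) := by
    unfold diversity
    rw [hDmax]
    push_cast [Nat.cast_sub hDle]
    ring
  have key : (D : ℚ) * (k-1).choose t + ((F.card : ℚ) - D) * k.choose t
      ≤ ((n-1).choose (k-1) : ℚ) * ((k-1).choose t : ℚ) := by
    have hid : (k:ℚ) * ((k-1).choose t : ℚ) = ((k:ℚ) - (t:ℚ)) * (k.choose t : ℚ) := by
      have := kchoose_aux k t htk
      have h2 : ((k * (k-1).choose t : ℕ) : ℚ) = (((k-t) * k.choose t : ℕ) : ℚ) := by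
        exact_mod_cast this
      push_cast [Nat.cast_sub htk.le] at h2
      linarith
    have hck : ((k.choose t : ℕ) : ℚ) = (k:ℚ) / ((k:ℚ) - (t:ℚ)) * ((k-1).choose t : ℚ) := by
      rw [div_mul_eq_mul_div, eq_div_iff (ne_of_gt hkt)]
      linarith [hid]
    rw [hG] at hcond
    have hc1nn : (0:ℚ) ≤ ((k-1).choose t : ℚ) := by positivity
    calc (D : ℚ) * (k-1).choose t + ((F.card : ℚ) - D) * k.choose t
        = ((D : ℚ) + (k:ℚ)/((k:ℚ)-(t:ℚ)) * ((F.card:ℚ) - D)) * ((k-1).choose t : ℚ) := by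
          rw [hck]; ring
      _ ≤ ((n-1).choose (k-1) : ℚ) * ((k-1).choose t : ℚ) := by
          apply mul_le_mul_of_nonneg_right _ hc1nn
          rw [hDmax] at hcond
          exact hcond
  -- convert to ℕ
  have keyN : D * (k-1).choose t + (F.card - D) * k.choose t
      ≤ (n-1).choose (k-1) * (k-1).choose t := by
    have : ((D * (k-1).choose t + (F.card - D) * k.choose t : ℕ) : ℚ)
        ≤ (((n-1).choose (k-1) * (k-1).choose t : ℕ) : ℚ) := by
      push_cast [Nat.cast_sub hDle]
      linarith [key]
    exact_mod_cast this
  -- the product identity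
  have hprod : (n-1).choose (k-1) * (k-1).choose t
      = (n-1).choose t * (n-t-1).choose (k-t-1) := by
    have := Nat.choose_mul (n := n-1) (k := k-1) (s := t) (by omega)
    rw [this]
    congr 1 <;> congr 1 <;> omega
  -- conclude
  by_contra hcon
  push_neg at hcon
  have hall : ∀ S ∈ P.powersetCard t, (n-t-1).choose (k-t-1) + 1 ≤ tDeg F S := by
    intro S hS
    rw [Finset.mem_powersetCard] at hS
    have : S ∈ (Finset.Icc 1 n).powersetCard t := by
      rw [Finset.mem_powersetCard]
      exact ⟨hS.1.trans (Finset.erase_subset _ _), hS.2⟩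
    exact hcon S this
  have hlow : (P.powersetCard t).card * ((n-t-1).choose (k-t-1) + 1)
      ≤ ∑ S ∈ P.powersetCard t, tDeg F S := by
    calc (P.powersetCard t).card * ((n-t-1).choose (k-t-1) + 1)
        = ∑ _S ∈ P.powersetCard t, ((n-t-1).choose (k-t-1) + 1) := by
          rw [Finset.sum_const, smul_eq_mul]
      _ ≤ ∑ S ∈ P.powersetCard t, tDeg F S := Finset.sum_le_sum hall
  rw [Finset.card_powersetCard, hPcard] at hlow
  have hNpos : 0 < (n-1).choose t := Nat.choose_pos (by omega)
  rw [hsum] at hlow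
  have := keyN.trans_eq hprod
  nlinarith [this, hlow, hNpos]
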